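/- Let F = (f_1,…,f_{2n+1}) : U → U' be a C² conformal diffeomorphism between open connected subsets of ℍⁿ with contact factor λ_F, and G = F⁻¹ = (g_1,…,g_{2n+1}). Then for all 1 ≤ k,ℓ ≤ n, on U: (X̃_ℓ g_k) ∘ F = X_{n+k}( f_{n+ℓ} · λ_F^{-1} ) and (X̃_ℓ g_{n+k}) ∘ F = −X_k( f_{n+ℓ} · λ_F^{-1} ). That is, ψ = f_{n+ℓ}·λ_F^{-1} satisfies (X̃_ℓ g_k) ∘ F = X_{n+k}ψ and (X̃_ℓ g_{n+k}) ∘ F = −X_kψ. -/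

import Mathlib

open Set Matrix MeasureTheory

noncomputable section

/-- The underlying space of the `n`-th Heisenberg group: `ℝ^(2n+1)` with coordinates
`(x_1,…,x_n,y_1,…,y_n,t)`. -/
abbrev Heis (n : ℕ) := Fin (2*n+1) → ℝ

/-- Index of the coordinate `x_j`. -/
def xIdx {n : ℕ} (j : Fin n) : Fin (2*n+1) := ⟨j.1, by have := j.2; omega⟩

/-- Index of the coordinate `y_j`. -/
def yIdx {n : ℕ} (j : Fin n) : Fin (2*n+1) := ⟨n + j.1, by have := j.2; omega⟩

/-- Index of the coordinate `t`. -/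
def tIdx {n : ℕ} : Fin (2*n+1) := ⟨2*n, by omega⟩

/-- The index `k ∈ {1,…,2n}` viewed inside `{1,…,2n+1}`. -/
def hIdx {n : ℕ} (k : Fin (2*n)) : Fin (2*n+1) := ⟨k.1, by have := k.2; omega⟩

variable {n : ℕ} {E : Type*} [NormedAddCommGroup E] [NormedSpace ℝ E]

/-- Partial derivative `∂u/∂p_i`. -/
def pd (i : Fin (2*n+1)) (u : Heis n → E) (p : Heis n) : E :=
  fderiv ℝ u p (Pi.single i 1)

/-- The left-invariant vector field `X_j = ∂/∂x_j + 2 y_j ∂/∂t` as a differential operator. -/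
def Xop (j : Fin n) (u : Heis n → E) (p : Heis n) : E :=
  pd (xIdx j) u p + (2 * p (yIdx j)) • pd tIdx u p

/-- The left-invariant vector field `Y_j = ∂/∂y_j - 2 x_j ∂/∂t` as a differential operator. -/
def Yop (j : Fin n) (u : Heis n → E) (p : Heis n) : E :=
  pd (yIdx j) u p - (2 * p (xIdx j)) • pd tIdx u p

/-- The vector field `T = ∂/∂t`. -/
def Tvf (u : Heis n → E) (p : Heis n) : E := pd tIdx u p

/-- `X_k` for `k = 1,…,2n`, where `X_{n+j} = Y_j`. -/
def XYop (k : Fin (2*n)) (u : Heis n → E) (p : Heis n) : E :=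
  if h : (k : ℕ) < n then Xop ⟨k.1, h⟩ u p
  else Yop ⟨k.1 - n, by have := k.2; omega⟩ u p

/-- The right-invariant mirror `X̃_j = X_j - 4 y_j T`. -/
def Xtilde (j : Fin n) (u : Heis n → E) (p : Heis n) : E :=
  Xop j u p - (4 * p (yIdx j)) • Tvf u p

/-- The right-invariant mirror `Ỹ_j = Y_j + 4 x_j T`. -/
def Ytilde (j : Fin n) (u : Heis n → E) (p : Heis n) : E :=
  Yop j u p + (4 * p (xIdx j)) • Tvf u p

/-- The complexified horizontal operator `Z_j = ½(X_j - i Y_j)`. -/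
def Zop (j : Fin n) (u : Heis n → ℂ) (p : Heis n) : ℂ :=
  (1/2 : ℂ) * (Xop j u p - Complex.I * Yop j u p)

/-- The complexified horizontal operator `Z̄_j = ½(X_j + i Y_j)`. -/
def Zbar (j : Fin n) (u : Heis n → ℂ) (p : Heis n) : ℂ :=
  (1/2 : ℂ) * (Xop j u p + Complex.I * Yop j u p)

/-- The operator `L_c = -¼ Σ_j (X_j² + Y_j²) + c T`. -/
def Lop (c : ℝ) (u : Heis n → ℂ) (p : Heis n) : ℂ :=
  -(1/4 : ℂ) * (∑ j : Fin n, (Xop j (Xop j u) p + Yop j (Yop j u) p)) + (c : ℂ) * Tvf u p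

/-- The Heisenberg group law
`(x,y,t)*(x',y',t') = (x+x', y+y', t+t'-2x·y'+2x'·y)`. -/
def hmul (p q : Heis n) : Heis n := fun i =>
  if (i : ℕ) < 2*n then p i + q i
  else p i + q i - 2 * ∑ j : Fin n, p (xIdx j) * q (yIdx j)
    + 2 * ∑ j : Fin n, q (xIdx j) * p (yIdx j)

/-- The point `exp(s X_j) = (s e_j, 0, 0)`. -/
def expX (j : Fin n) (s : ℝ) : Heis n := fun i => if i = xIdx j then s else 0

/-- The point `exp(s Y_j) = (0, s e_j, 0)`. -/
def expY (j : Fin n) (s : ℝ) : Heis n := fun i => if i = yIdx j then s else 0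

/-- The point `exp(s T) = (0, 0, s)`. -/
def expT {n : ℕ} (s : ℝ) : Heis n := fun i => if i = tIdx then s else 0

/-- The standard contact form `α = dt + 2 Σ_k (x_k dy_k - y_k dx_k)` evaluated at the point `p`
on the tangent vector `v`. -/
def alphaForm (p v : Heis n) : ℝ :=
  v tIdx + 2 * ∑ j : Fin n, (p (xIdx j) * v (yIdx j) - p (yIdx j) * v (xIdx j))

/-- `F` is a contact map on `U` with (positive) contact factor `lam`: `F^*α = lam · α`. -/
def IsContact (U : Set (Heis n)) (F : Heis n → Heis n) (lam : Heis n → ℝ) : Prop :=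
  (∀ p ∈ U, 0 < lam p) ∧
  ∀ p ∈ U, ∀ v : Heis n, alphaForm (F p) (fderiv ℝ F p v) = lam p * alphaForm p v

/-- The horizontal differential `D₀F`, the `2n × 2n` matrix with entries `(D₀F)_{m,ℓ} = X_ℓ f_m`. -/
def D0 (F : Heis n → Heis n) (p : Heis n) : Matrix (Fin (2*n)) (Fin (2*n)) ℝ :=
  Matrix.of fun m ℓ => XYop ℓ (fun q => F q (hIdx m)) p

/-- The horizontal Jacobian `J₀F = det D₀F`. -/
def J0 (F : Heis n → Heis n) (p : Heis n) : ℝ := (D0 F p).det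

/-- `F` is conformal on `U` with contact factor `lam`: `F` is contact, `J₀F > 0`, and
`(D₀F)ᵀ (D₀F) = (J₀F)^{1/n} I_{2n}`. -/
def IsConformal (U : Set (Heis n)) (F : Heis n → Heis n) (lam : Heis n → ℝ) : Prop :=
  IsContact U F lam ∧ (∀ p ∈ U, 0 < J0 F p) ∧
  ∀ p ∈ U, (D0 F p)ᵀ * (D0 F p) = (J0 F p ^ (1 / (n : ℝ))) • (1 : Matrix (Fin (2*n)) (Fin (2*n)) ℝ)

/-- The full Jacobian matrix of `F : ℝ^{2n+1} → ℝ^{2n+1}` at `p`. -/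
def fullJac (F : Heis n → Heis n) (p : Heis n) : Matrix (Fin (2*n+1)) (Fin (2*n+1)) ℝ :=
  Matrix.of fun i j => pd j (fun q => F q i) p

end
noncomputable section AuxPotential

variable {n : ℕ}

/-! ### Index lemmas -/

lemma aux_xIdx_ne_tIdx (j : Fin n) : xIdx j ≠ tIdx := by
  have := j.2; simp [xIdx, tIdx, Fin.ext_iff]; omega

lemma aux_yIdx_ne_tIdx (j : Fin n) : yIdx j ≠ tIdx := by
  have := j.2; simp [yIdx, tIdx, Fin.ext_iff]; omega

lemma aux_xIdx_ne_yIdx (j j' : Fin n) : xIdx j ≠ yIdx j' := by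
  have := j.2; simp [xIdx, yIdx, Fin.ext_iff]; omega

lemma aux_xIdx_inj {j j' : Fin n} : xIdx j = xIdx j' ↔ j = j' := by
  simp [xIdx, Fin.ext_iff]

lemma aux_yIdx_inj {j j' : Fin n} : yIdx j = yIdx j' ↔ j = j' := by
  simp [yIdx, Fin.ext_iff]

/-- The index `j` as an element of `Fin (2*n)` (x-slot). -/
def finx (j : Fin n) : Fin (2*n) := ⟨j.1, by have := j.2; omega⟩

/-- The index `n+j` as an element of `Fin (2*n)` (y-slot). -/
def finy (j : Fin n) : Fin (2*n) := ⟨n + j.1, by have := j.2; omega⟩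

lemma aux_hIdx_finx (j : Fin n) : hIdx (finx j) = xIdx j := rfl
lemma aux_hIdx_finy (j : Fin n) : hIdx (finy j) = yIdx j := rfl

lemma aux_hIdx_ne_tIdx (m : Fin (2*n)) : hIdx m ≠ tIdx := by
  have := m.2; simp [hIdx, tIdx, Fin.ext_iff]; omega

lemma aux_hIdx_inj {m m' : Fin (2*n)} : hIdx m = hIdx m' ↔ m = m' := by
  simp [hIdx, Fin.ext_iff]

lemma aux_fin2n_cases (i : Fin (2*n)) : (∃ j : Fin n, i = finx j) ∨ (∃ j : Fin n, i = finy j) := by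
  have := i.2
  rcases lt_or_ge i.1 n with h | h
  · exact Or.inl ⟨⟨i.1, h⟩, by simp [finx, Fin.ext_iff]⟩
  · exact Or.inr ⟨⟨i.1 - n, by omega⟩, by simp [finy, Fin.ext_iff]; omega⟩

lemma aux_sum_split (g : Fin (2*n) → ℝ) :
    ∑ m, g m = (∑ j : Fin n, g (finx j)) + ∑ j : Fin n, g (finy j) := by
  have h : n + n = 2*n := by omega
  rw [← Fin.sum_congr' g h, Fin.sum_univ_add]
  congr 1

end AuxPotential
noncomputable section AuxPotential2

variable {n : ℕ}

/-- unit vector in the `t` direction -/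
def etv : Heis n := Pi.single tIdx 1

/-- frame vector of `X_m` (for `m < n`) resp. `Y_{m-n}` at `p`, as a tangent vector. -/
def Vb (p : Heis n) (m : Fin (2*n)) : Heis n :=
  if h : m.1 < n then
    (Pi.single (xIdx ⟨m.1, h⟩) 1 : Heis n) + (2 * p (yIdx ⟨m.1, h⟩)) • (Pi.single tIdx 1 : Heis n)
  else
    (Pi.single (yIdx ⟨m.1 - n, by have := m.2; omega⟩) 1 : Heis n)
      - (2 * p (xIdx ⟨m.1 - n, by have := m.2; omega⟩)) • (Pi.single tIdx 1 : Heis n)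

/-- the canonical formula for the contact factor -/
def Lam (F : Heis n → Heis n) (q : Heis n) : ℝ :=
  alphaForm (F q) (fderiv ℝ F q (Pi.single tIdx 1))

/-- horizontal symplectic pairing of two tangent vectors -/
def Om (c d : Heis n) : ℝ :=
  ∑ j : Fin n, (c (xIdx j) * d (yIdx j) - c (yIdx j) * d (xIdx j))

/-- the contact form as a continuous linear map in its second argument -/
def alphaL (p : Heis n) : Heis n →L[ℝ] ℝ :=
  ContinuousLinearMap.proj tIdx +
    (2:ℝ) • ∑ j : Fin n, (p (xIdx j) • (ContinuousLinearMap.proj (yIdx j) : Heis n →L[ℝ] ℝ)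
      - p (yIdx j) • (ContinuousLinearMap.proj (xIdx j) : Heis n →L[ℝ] ℝ))

lemma alphaL_apply (p v : Heis n) : alphaL p v = alphaForm p v := by
  simp [alphaL, alphaForm, ContinuousLinearMap.sum_apply, mul_comm]

lemma alpha_etv (p : Heis n) : alphaForm p (etv (n := n)) = 1 := by
  simp [alphaForm, etv, Pi.single_apply, aux_xIdx_ne_tIdx, aux_yIdx_ne_tIdx]

lemma Vb_finx (p : Heis n) (j : Fin n) :
    Vb p (finx j) = (Pi.single (xIdx j) 1 : Heis n) + (2 * p (yIdx j)) • (Pi.single tIdx 1 : Heis n) := by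
  simp only [Vb, finx]
  exact dif_pos j.2

lemma Vb_finy (p : Heis n) (j : Fin n) :
    Vb p (finy j) = (Pi.single (yIdx j) 1 : Heis n) - (2 * p (xIdx j)) • (Pi.single tIdx 1 : Heis n) := by
  have h2 : ¬ ((finy j).1 < n) := by simp [finy]
  simp only [Vb]
  rw [dif_neg h2]
  have he : (⟨(finy j).1 - n, by have := (finy j).2; omega⟩ : Fin n) = j := by
    simp [finy, Fin.ext_iff]
  rw [he]

/-- horizontal components of the frame vectors -/
lemma Vb_hIdx (p : Heis n) (m : Fin (2*n)) (j : Fin (2*n)) :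
    Vb p m (hIdx j) = (Pi.single m 1 : Fin (2*n) → ℝ) j := by
  rcases aux_fin2n_cases m with ⟨a, rfl⟩ | ⟨a, rfl⟩
  · rw [Vb_finx]
    simp only [Pi.add_apply, Pi.smul_apply, smul_eq_mul]
    rw [Pi.single_apply, Pi.single_apply, Pi.single_apply]
    rw [if_neg (aux_hIdx_ne_tIdx j)]
    simp only [show (hIdx j = xIdx a) ↔ (j = finx a) from by rw [← aux_hIdx_finx, aux_hIdx_inj]]
    ring
  · rw [Vb_finy]
    simp only [Pi.sub_apply, Pi.smul_apply, smul_eq_mul]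
    rw [Pi.single_apply, Pi.single_apply, Pi.single_apply]
    rw [if_neg (aux_hIdx_ne_tIdx j)]
    simp only [show (hIdx j = yIdx a) ↔ (j = finy a) from by rw [← aux_hIdx_finy, aux_hIdx_inj]]
    ring

lemma etv_hIdx (j : Fin (2*n)) : (etv (n := n)) (hIdx j) = 0 :=
  Pi.single_eq_of_ne (aux_hIdx_ne_tIdx j) 1

lemma alpha_Vb (p : Heis n) (m : Fin (2*n)) : alphaForm p (Vb p m) = 0 := by
  rcases aux_fin2n_cases m with ⟨a, rfl⟩ | ⟨a, rfl⟩
  · rw [Vb_finx]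
    simp [alphaForm, Pi.single_apply, aux_xIdx_ne_tIdx, aux_yIdx_ne_tIdx,
      (aux_xIdx_ne_yIdx _ _), aux_xIdx_inj, Finset.mul_sum, mul_ite,
      aux_yIdx_inj, fun j j' => (aux_xIdx_ne_yIdx j j').symm]
  · rw [Vb_finy]
    simp [alphaForm, Pi.single_apply, aux_xIdx_ne_tIdx, aux_yIdx_ne_tIdx,
      (aux_xIdx_ne_yIdx _ _), aux_xIdx_inj, Finset.mul_sum, mul_ite,
      aux_yIdx_inj, fun j j' => (aux_xIdx_ne_yIdx j j').symm]

lemma Om_etv_right (c : Heis n) : Om c (etv (n := n)) = 0 := by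
  simp [Om, etv, Pi.single_apply, aux_xIdx_ne_tIdx, aux_yIdx_ne_tIdx]

lemma Om_antisymm (c d : Heis n) : Om c d = - Om d c := by
  simp only [Om, ← Finset.sum_neg_distrib]
  exact Finset.sum_congr rfl fun j _ => by ring

end AuxPotential2
noncomputable section AuxPotential3

variable {n : ℕ}

lemma aux_line (p w : Heis n) : HasDerivAt (fun s : ℝ => p + s • w) w 0 := by
  simpa using ((hasDerivAt_id (0:ℝ)).smul_const w).const_add p

lemma aux_diff_line {E : Type*} [NormedAddCommGroup E] [NormedSpace ℝ E]
    {u : Heis n → E} {p : Heis n} (hu : DifferentiableAt ℝ u p) (w : Heis n) :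
    HasDerivAt (fun s : ℝ => u (p + s • w)) (fderiv ℝ u p w) 0 := by
  have he : p + (0:ℝ) • w = p := by simp
  have h1 : HasFDerivAt u (fderiv ℝ u p) ((fun s : ℝ => p + s • w) 0) := by
    simpa [he] using hu.hasFDerivAt
  exact h1.comp_hasDerivAt 0 (aux_line p w)

lemma aux_coord_line {F : Heis n → Heis n} {p : Heis n} (hF : DifferentiableAt ℝ F p)
    (w : Heis n) (i : Fin (2*n+1)) :
    HasDerivAt (fun s : ℝ => F (p + s • w) i) (fderiv ℝ F p w i) 0 :=
  (ContinuousLinearMap.proj (R := ℝ) (φ := fun _ : Fin (2*n+1) => ℝ)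
    i).hasFDerivAt.comp_hasDerivAt 0 (aux_diff_line hF w)

lemma aux_pd_line (p w : Heis n) (i : Fin (2*n+1)) :
    HasDerivAt (fun s : ℝ => (p + s • w) i) (w i) 0 :=
  (ContinuousLinearMap.proj (R := ℝ) (φ := fun _ : Fin (2*n+1) => ℝ)
    i).hasFDerivAt.comp_hasDerivAt 0 (aux_line p w)

lemma aux_fderiv_coord {F : Heis n → Heis n} {p : Heis n} (hF : DifferentiableAt ℝ F p)
    (i : Fin (2*n+1)) (v : Heis n) :
    fderiv ℝ (fun q => F q i) p v = fderiv ℝ F p v i := by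
  have h := ((ContinuousLinearMap.proj (R := ℝ) (φ := fun _ : Fin (2*n+1) => ℝ) i).hasFDerivAt
      (x := F p)).comp p hF.hasFDerivAt
  have h2 : fderiv ℝ (fun q => F q i) p
      = (ContinuousLinearMap.proj i).comp (fderiv ℝ F p) := h.fderiv
  rw [h2]; rfl

variable {U : Set (Heis n)} {F : Heis n → Heis n} {lamF : Heis n → ℝ} {p : Heis n}

lemma aux_lam_eq (hcon : IsContact U F lamF) (hp : p ∈ U) : lamF p = Lam F p := by
  have h := hcon.2 p hp (Pi.single tIdx 1)
  have ha : alphaForm p (Pi.single tIdx 1) = 1 := alpha_etv p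
  unfold Lam
  rw [h, ha, mul_one]

lemma aux_lam_pos (hcon : IsContact U F lamF) (hp : p ∈ U) : 0 < Lam F p :=
  aux_lam_eq hcon hp ▸ hcon.1 p hp

lemma aux_lam_diff (hF : ContDiffOn ℝ 2 F U) (hU : IsOpen U) (hp : p ∈ U) :
    DifferentiableAt ℝ (Lam F) p := by
  have h2 : ContDiffAt ℝ 2 F p := hF.contDiffAt (hU.mem_nhds hp)
  have hFd : DifferentiableAt ℝ F p := h2.differentiableAt two_ne_zero
  have hf'd : DifferentiableAt ℝ (fderiv ℝ F) p :=
    (h2.fderiv_right (m := 1) (by norm_num)).differentiableAt one_ne_zero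
  have hcF : ∀ i, DifferentiableAt ℝ (fun q => F q i) p := fun i =>
    ((ContinuousLinearMap.proj (R := ℝ) (φ := fun _ : Fin (2*n+1) => ℝ)
      i).differentiableAt).comp p hFd
  have hd2 : ∀ i, DifferentiableAt ℝ (fun q => fderiv ℝ F q (Pi.single tIdx 1) i) p := fun i =>
    (((ContinuousLinearMap.proj (R := ℝ) (φ := fun _ : Fin (2*n+1) => ℝ) i).comp
        (ContinuousLinearMap.apply ℝ (Heis n) ((Pi.single tIdx 1 : Heis n)))).differentiableAt).comp p hf'd
  unfold Lam alphaForm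
  exact (hd2 tIdx).add (DifferentiableAt.const_mul
    (DifferentiableAt.fun_sum fun j _ => ((hcF _).mul (hd2 _)).sub ((hcF _).mul (hd2 _))) 2)

lemma aux_E (hF : ContDiffOn ℝ 2 F U) (hU : IsOpen U) (hcon : IsContact U F lamF)
    (hp : p ∈ U) (v w : Heis n) :
    alphaForm (F p) (fderiv ℝ (fderiv ℝ F) p w v)
      + 2 * Om (fderiv ℝ F p w) (fderiv ℝ F p v)
      - fderiv ℝ (Lam F) p w * alphaForm p v
      - 2 * Lam F p * Om w v = 0 := by
  have h2 : ContDiffAt ℝ 2 F p := hF.contDiffAt (hU.mem_nhds hp)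
  have hFd : DifferentiableAt ℝ F p := h2.differentiableAt two_ne_zero
  have hf'd : DifferentiableAt ℝ (fderiv ℝ F) p :=
    (h2.fderiv_right (m := 1) (by norm_num)).differentiableAt one_ne_zero
  have hΛd : DifferentiableAt ℝ (Lam F) p := aux_lam_diff hF hU hp
  have hc : ∀ i, HasDerivAt (fun s : ℝ => F (p + s • w) i) (fderiv ℝ F p w i) 0 :=
    aux_coord_line hFd w
  have hdv : ∀ i, HasDerivAt (fun s : ℝ => fderiv ℝ F (p + s • w) v i)
      (fderiv ℝ (fderiv ℝ F) p w v i) 0 := by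
    intro i
    exact ((ContinuousLinearMap.proj i).comp
      (ContinuousLinearMap.apply ℝ (Heis n) v)).hasFDerivAt.comp_hasDerivAt 0
        (aux_diff_line hf'd w)
  have hL : HasDerivAt (fun s : ℝ => Lam F (p + s • w)) (fderiv ℝ (Lam F) p w) 0 :=
    aux_diff_line hΛd w
  have hq : ∀ i, HasDerivAt (fun s : ℝ => (p + s • w) i) (w i) 0 := aux_pd_line p w
  have HD0 := ((hdv tIdx).add (HasDerivAt.const_mul 2 (HasDerivAt.fun_sum
      (fun j (_ : j ∈ Finset.univ) =>
        ((hc (xIdx j)).mul (hdv (yIdx j))).sub ((hc (yIdx j)).mul (hdv (xIdx j))))))).sub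
    (hL.mul ((HasDerivAt.const_mul 2 (HasDerivAt.fun_sum
      (fun j (_ : j ∈ Finset.univ) =>
        ((hq (xIdx j)).mul_const (v (yIdx j))).sub
          ((hq (yIdx j)).mul_const (v (xIdx j)))))).const_add (v tIdx)))
  have hev : (fun s : ℝ => alphaForm (F (p + s • w)) (fderiv ℝ F (p + s • w) v)
      - Lam F (p + s • w) * alphaForm (p + s • w) v) =ᶠ[nhds (0:ℝ)] (fun _ => 0) := by
    have hcont : ContinuousAt (fun s : ℝ => p + s • w) 0 := (aux_line p w).continuousAt
    have hmem : U ∈ nhds ((fun s : ℝ => p + s • w) 0) := by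
      have : p + (0:ℝ) • w = p := by simp
      rw [show (fun s : ℝ => p + s • w) 0 = p from this]
      exact hU.mem_nhds hp
    filter_upwards [hcont.preimage_mem_nhds hmem] with s hs
    have h := hcon.2 _ hs v
    rw [aux_lam_eq hcon hs] at h
    simp [h]
  have HZ : HasDerivAt (fun s : ℝ => alphaForm (F (p + s • w)) (fderiv ℝ F (p + s • w) v)
      - Lam F (p + s • w) * alphaForm (p + s • w) v) (0:ℝ) 0 :=
    (hasDerivAt_const (0:ℝ) (0:ℝ)).congr_of_eventuallyEq hev
  have h0 := HZ.unique (by unfold alphaForm; exact HD0)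
  simp only [zero_smul, add_zero, Pi.sub_apply] at h0
  simp only [Finset.sum_sub_distrib, Finset.sum_add_distrib] at h0
  unfold alphaForm Om
  simp only [Finset.sum_sub_distrib]
  linear_combination -h0

lemma aux_star (hF : ContDiffOn ℝ 2 F U) (hU : IsOpen U) (hcon : IsContact U F lamF)
    (hp : p ∈ U) (v w : Heis n) :
    4 * Om (fderiv ℝ F p w) (fderiv ℝ F p v)
      = fderiv ℝ (Lam F) p w * alphaForm p v - fderiv ℝ (Lam F) p v * alphaForm p w
        + 4 * Lam F p * Om w v := by
  have h1 := aux_E hF hU hcon hp v w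
  have h2 := aux_E hF hU hcon hp w v
  have hsym : fderiv ℝ (fderiv ℝ F) p w v = fderiv ℝ (fderiv ℝ F) p v w :=
    ((hF.contDiffAt (hU.mem_nhds hp)).isSymmSndFDerivAt (by simp [minSmoothness_of_isRCLikeNormedField])) w v
  rw [hsym] at h1
  have ha : Om (fderiv ℝ F p v) (fderiv ℝ F p w)
      = - Om (fderiv ℝ F p w) (fderiv ℝ F p v) := Om_antisymm _ _
  have hb : Om v w = - Om w v := Om_antisymm _ _
  linear_combination h1 - h2 + 2 * ha - 2 * Lam F p * hb

end AuxPotential3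
noncomputable section AuxPotential4

variable {n : ℕ}

/-- standard symplectic matrix -/
def Jmat (n : ℕ) : Matrix (Fin (2*n)) (Fin (2*n)) ℝ :=
  Matrix.of fun i j => (if i.1 + n = j.1 then (1:ℝ) else 0) - (if j.1 + n = i.1 then 1 else 0)

lemma Jmat_finx (j : Fin n) (k : Fin (2*n)) :
    Jmat n (finx j) k = (if k = finy j then 1 else 0) := by
  have hj := j.2; have hk := k.2
  have h1 : (k = finy j) ↔ ((k:ℕ) = n + j.1) := by simp [finy, Fin.ext_iff]
  simp only [Jmat, Matrix.of_apply, h1]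
  have h2 : (finx j : Fin (2*n)).1 = j.1 := rfl
  rw [h2]
  split_ifs <;> first | (exfalso; omega) | norm_num

lemma Jmat_finy (j : Fin n) (k : Fin (2*n)) :
    Jmat n (finy j) k = (if k = finx j then -1 else 0) := by
  have hj := j.2; have hk := k.2
  have h1 : (k = finx j) ↔ ((k:ℕ) = j.1) := by simp [finx, Fin.ext_iff]
  simp only [Jmat, Matrix.of_apply, h1]
  have h2 : (finy j : Fin (2*n)).1 = n + j.1 := rfl
  rw [h2]
  split_ifs <;> first | (exfalso; omega) | norm_num

lemma Jmat_col_finx (j : Fin n) (k : Fin (2*n)) :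
    Jmat n k (finx j) = (if k = finy j then -1 else 0) := by
  have hj := j.2; have hk := k.2
  have h1 : (k = finy j) ↔ ((k:ℕ) = n + j.1) := by simp [finy, Fin.ext_iff]
  simp only [Jmat, Matrix.of_apply, h1]
  have h2 : (finx j : Fin (2*n)).1 = j.1 := rfl
  rw [h2]
  split_ifs <;> first | (exfalso; omega) | norm_num

lemma Jmat_col_finy (j : Fin n) (k : Fin (2*n)) :
    Jmat n k (finy j) = (if k = finx j then 1 else 0) := by
  have hj := j.2; have hk := k.2
  have h1 : (k = finx j) ↔ ((k:ℕ) = j.1) := by simp [finx, Fin.ext_iff]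
  simp only [Jmat, Matrix.of_apply, h1]
  have h2 : (finy j : Fin (2*n)).1 = n + j.1 := rfl
  rw [h2]
  split_ifs <;> first | (exfalso; omega) | norm_num

/-- symplectic pairing on `Fin (2n)`-vectors -/
def sB (u v : Fin (2*n) → ℝ) : ℝ :=
  ∑ j : Fin n, (u (finx j) * v (finy j) - u (finy j) * v (finx j))

lemma mulVec_Jmat_finx (v : Fin (2*n) → ℝ) (j : Fin n) :
    (Jmat n *ᵥ v) (finx j) = v (finy j) := by
  simp only [Matrix.mulVec, dotProduct, Jmat_finx, ite_mul, one_mul, zero_mul]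
  rw [Finset.sum_ite_eq' Finset.univ (finy j) v]
  simp

lemma mulVec_Jmat_finy (v : Fin (2*n) → ℝ) (j : Fin n) :
    (Jmat n *ᵥ v) (finy j) = - v (finx j) := by
  simp only [Matrix.mulVec, dotProduct, Jmat_finy, ite_mul, neg_mul, one_mul, zero_mul]
  rw [Finset.sum_ite_eq' Finset.univ (finx j) (fun k => -v k)]
  simp

lemma sB_eq_dot (u v : Fin (2*n) → ℝ) : sB u v = u ⬝ᵥ (Jmat n *ᵥ v) := by
  unfold dotProduct
  rw [aux_sum_split (fun m => u m * (Jmat n *ᵥ v) m)]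
  simp only [mulVec_Jmat_finx, mulVec_Jmat_finy, mul_neg]
  unfold sB
  rw [Finset.sum_sub_distrib, Finset.sum_neg_distrib]
  ring

lemma Jmul_finx (M : Matrix (Fin (2*n)) (Fin (2*n)) ℝ) (a : Fin n) (c : Fin (2*n)) :
    (Jmat n * M) (finx a) c = M (finy a) c := by
  simp only [Matrix.mul_apply, Jmat_finx, ite_mul, one_mul, zero_mul]
  rw [Finset.sum_ite_eq' Finset.univ (finy a) (fun k => M k c)]
  simp

lemma Jmul_finy (M : Matrix (Fin (2*n)) (Fin (2*n)) ℝ) (a : Fin n) (c : Fin (2*n)) :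
    (Jmat n * M) (finy a) c = - M (finx a) c := by
  simp only [Matrix.mul_apply, Jmat_finy, ite_mul, neg_mul, one_mul, zero_mul]
  rw [Finset.sum_ite_eq' Finset.univ (finx a) (fun k => -M k c)]
  simp

lemma mulJ_finx (M : Matrix (Fin (2*n)) (Fin (2*n)) ℝ) (r : Fin (2*n)) (b : Fin n) :
    (M * Jmat n) r (finx b) = - M r (finy b) := by
  simp only [Matrix.mul_apply, Jmat_col_finx, mul_ite, mul_neg_one, mul_zero]
  rw [Finset.sum_ite_eq' Finset.univ (finy b) (fun k => -M r k)]
  simp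

lemma mulJ_finy (M : Matrix (Fin (2*n)) (Fin (2*n)) ℝ) (r : Fin (2*n)) (b : Fin n) :
    (M * Jmat n) r (finy b) = M r (finx b) := by
  simp only [Matrix.mul_apply, Jmat_col_finy, mul_ite, mul_one, mul_zero]
  rw [Finset.sum_ite_eq' Finset.univ (finx b) (fun k => M r k)]
  simp

lemma aux_finx_ne_finy (a b : Fin n) : finx a ≠ finy b := by
  have := a.2; simp [finx, finy, Fin.ext_iff]; omega

lemma Jmat_mul_Jmat : Jmat n * Jmat n = -1 := by
  ext i j
  rw [Matrix.neg_apply, Matrix.one_apply]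
  rcases aux_fin2n_cases i with ⟨a, rfl⟩ | ⟨a, rfl⟩
  · rw [Jmul_finx, Jmat_finy]
    have ha := a.2; have hjj := j.2
    simp only [Fin.ext_iff, finx, finy]
    split_ifs <;> first | (exfalso; omega) | norm_num
  · rw [Jmul_finy, Jmat_finx]
    have ha := a.2; have hjj := j.2
    simp only [Fin.ext_iff, finx, finy]
    split_ifs <;> first | (exfalso; omega) | norm_num

end AuxPotential4
noncomputable section AuxPotential5

variable {n : ℕ}

lemma aux_Xop_fderiv (j : Fin n) (u : Heis n → ℝ) (p : Heis n) :
    Xop j u p = fderiv ℝ u p (Vb p (finx j)) := by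
  rw [Vb_finx, (fderiv ℝ u p).map_add, (fderiv ℝ u p).map_smul]
  rfl

lemma aux_Yop_fderiv (j : Fin n) (u : Heis n → ℝ) (p : Heis n) :
    Yop j u p = fderiv ℝ u p (Vb p (finy j)) := by
  rw [Vb_finy, (fderiv ℝ u p).map_sub, (fderiv ℝ u p).map_smul]
  rfl

lemma aux_XYop_fderiv (m : Fin (2*n)) (u : Heis n → ℝ) (p : Heis n) :
    XYop m u p = fderiv ℝ u p (Vb p m) := by
  unfold XYop
  split
  · next h =>
    have hm : m = finx ⟨m.1, h⟩ := by simp [finx, Fin.ext_iff]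
    rw [aux_Xop_fderiv]
    exact congrArg (fderiv ℝ u p) (congrArg (Vb p) hm.symm)
  · next h =>
    have hm2 := m.2
    have hm : m = finy ⟨m.1 - n, by omega⟩ := by simp [finy, Fin.ext_iff]; omega
    rw [aux_Yop_fderiv]
    exact congrArg (fderiv ℝ u p) (congrArg (Vb p) hm.symm)

lemma aux_D0_entry {F : Heis n → Heis n} {p : Heis n} (hFd : DifferentiableAt ℝ F p)
    (m ℓ : Fin (2*n)) : D0 F p m ℓ = fderiv ℝ F p (Vb p ℓ) (hIdx m) := by
  show XYop ℓ (fun q => F q (hIdx m)) p = _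
  rw [aux_XYop_fderiv, aux_fderiv_coord hFd]

variable {U : Set (Heis n)} {F : Heis n → Heis n} {lamF : Heis n → ℝ} {p : Heis n}

lemma aux_K2 (hF : ContDiffOn ℝ 2 F U) (hU : IsOpen U) (hcon : IsContact U F lamF)
    (hp : p ∈ U) :
    (D0 F p)ᵀ * Jmat n * (D0 F p) = Lam F p • Jmat n := by
  have hFd : DifferentiableAt ℝ F p :=
    (hF.contDiffAt (hU.mem_nhds hp)).differentiableAt two_ne_zero
  have hD : ∀ m ℓ, D0 F p m ℓ = fderiv ℝ F p (Vb p ℓ) (hIdx m) := aux_D0_entry hFd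
  ext i j
  have e1 : ((D0 F p)ᵀ * Jmat n * D0 F p) i j
      = sB (fun m => D0 F p m i) (fun k => D0 F p k j) := by
    rw [sB_eq_dot, Matrix.mul_assoc]
    simp [Matrix.mul_apply, Matrix.transpose_apply, Matrix.mulVec, dotProduct]
  have e2 : sB (fun m => D0 F p m i) (fun k => D0 F p k j)
      = Om (fderiv ℝ F p (Vb p i)) (fderiv ℝ F p (Vb p j)) := by
    unfold sB Om
    exact Finset.sum_congr rfl fun a _ => by
      show D0 F p (finx a) i * D0 F p (finy a) j - D0 F p (finy a) i * D0 F p (finx a) j = _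
      rw [hD, hD, hD, hD]
      rfl
  have e3 : 4 * Om (fderiv ℝ F p (Vb p i)) (fderiv ℝ F p (Vb p j))
      = 4 * Lam F p * Om (Vb p i) (Vb p j) := by
    have := aux_star hF hU hcon hp (Vb p j) (Vb p i)
    rw [alpha_Vb, alpha_Vb] at this
    linarith [this]
  have e4 : Om (Vb p i) (Vb p j)
      = sB (Pi.single i 1) ((Pi.single j 1 : Fin (2*n) → ℝ)) := by
    unfold sB Om
    exact Finset.sum_congr rfl fun a _ => by
      show Vb p i (hIdx (finx a)) * Vb p j (hIdx (finy a))
          - Vb p i (hIdx (finy a)) * Vb p j (hIdx (finx a)) = _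
      rw [Vb_hIdx, Vb_hIdx, Vb_hIdx, Vb_hIdx]
  have e5 : sB (Pi.single i 1) ((Pi.single j 1 : Fin (2*n) → ℝ)) = Jmat n i j := by
    rw [sB_eq_dot]
    rw [single_dotProduct]
    rw [show (Jmat n *ᵥ (Pi.single j 1 : Fin (2*n) → ℝ)) i
        = ∑ k, Jmat n i k * (Pi.single j 1 : Fin (2*n) → ℝ) k from rfl]
    simp [Pi.single_apply, mul_ite, Finset.sum_ite_eq']
  rw [e1, e2]
  have : Om (fderiv ℝ F p (Vb p i)) (fderiv ℝ F p (Vb p j))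
      = Lam F p * (sB (Pi.single i 1) ((Pi.single j 1 : Fin (2*n) → ℝ))) := by
    rw [← e4]; linarith [e3]
  rw [this, e5, Matrix.smul_apply, smul_eq_mul]

lemma aux_master (hF : ContDiffOn ℝ 2 F U) (hU : IsOpen U)
    (hconf : IsConformal U F lamF) (hp : p ∈ U) (hn : 0 < n) :
    (∀ j m', (∑ m, D0 F p j m * D0 F p m' m) = Lam F p * (if j = m' then 1 else 0))
    ∧ (∀ a b : Fin n, D0 F p (finy a) (finy b) = D0 F p (finx a) (finx b))
    ∧ (∀ a b : Fin n, D0 F p (finy a) (finx b) = - D0 F p (finx a) (finy b))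
    ∧ (∀ b : Fin n, 4 * (∑ m, D0 F p m (finx b)
        * fderiv ℝ F p ((Pi.single tIdx 1 : Heis n)) (hIdx m))
        = - fderiv ℝ (Lam F) p (Vb p (finy b)))
    ∧ (∀ b : Fin n, 4 * (∑ m, D0 F p m (finy b)
        * fderiv ℝ F p ((Pi.single tIdx 1 : Heis n)) (hIdx m))
        = fderiv ℝ (Lam F) p (Vb p (finx b))) := by
  obtain ⟨hcon, hJ0, hK1m⟩ := hconf
  have hFd : DifferentiableAt ℝ F p :=
    (hF.contDiffAt (hU.mem_nhds hp)).differentiableAt two_ne_zero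
  have hD : ∀ m ℓ, D0 F p m ℓ = fderiv ℝ F p (Vb p ℓ) (hIdx m) := aux_D0_entry hFd
  set A := D0 F p with hA
  set μ := J0 F p ^ (1/(n:ℝ)) with hμ
  set Λ := Lam F p with hΛdef
  have hμpos : 0 < μ := Real.rpow_pos_of_pos (hJ0 p hp) _
  have hΛpos : 0 < Λ := aux_lam_pos hcon hp
  have hK1 : Aᵀ * A = μ • 1 := hK1m p hp
  have hAAt : A * Aᵀ = μ • 1 := by
    have h1 : (μ⁻¹ • Aᵀ) * A = 1 := by
      rw [Matrix.smul_mul, hK1, smul_smul, inv_mul_cancel₀ hμpos.ne', one_smul]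
    have h2 : A * (μ⁻¹ • Aᵀ) = 1 := mul_eq_one_comm.mpr h1
    calc A * Aᵀ = μ • (A * (μ⁻¹ • Aᵀ)) := by
          rw [Matrix.mul_smul, smul_smul, mul_inv_cancel₀ hμpos.ne', one_smul]
      _ = μ • 1 := by rw [h2]
  have hK2 : Aᵀ * Jmat n * A = Λ • Jmat n := aux_K2 hF hU hcon hp
  have h3 : μ • (Jmat n * A) = Λ • (A * Jmat n) := by
    calc μ • (Jmat n * A) = (μ • 1) * (Jmat n * A) := by rw [Matrix.smul_mul, one_mul]
      _ = (A * Aᵀ) * (Jmat n * A) := by rw [hAAt]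
      _ = A * (Aᵀ * Jmat n * A) := by rw [Matrix.mul_assoc, Matrix.mul_assoc]
      _ = A * (Λ • Jmat n) := by rw [hK2]
      _ = Λ • (A * Jmat n) := by rw [Matrix.mul_smul]
  have h4 : Jmat n * A = (μ⁻¹ * Λ) • (A * Jmat n) := by
    calc Jmat n * A = μ⁻¹ • (μ • (Jmat n * A)) := by
          rw [smul_smul, inv_mul_cancel₀ hμpos.ne', one_smul]
      _ = μ⁻¹ • (Λ • (A * Jmat n)) := by rw [h3]
      _ = (μ⁻¹ * Λ) • (A * Jmat n) := by rw [smul_smul]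
  have h5 : A = ((μ⁻¹*Λ)^2) • A := by
    calc A = -((Jmat n * Jmat n) * A) := by rw [Jmat_mul_Jmat]; simp
      _ = -(Jmat n * (Jmat n * A)) := by rw [Matrix.mul_assoc]
      _ = -(Jmat n * ((μ⁻¹*Λ) • (A * Jmat n))) := by rw [← h4]
      _ = -((μ⁻¹*Λ) • ((Jmat n * A) * Jmat n)) := by
          rw [Matrix.mul_smul, Matrix.mul_assoc]
      _ = -((μ⁻¹*Λ) • (((μ⁻¹*Λ) • (A * Jmat n)) * Jmat n)) := by rw [← h4]
      _ = -(((μ⁻¹*Λ)^2) • ((A * Jmat n) * Jmat n)) := by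
          rw [Matrix.smul_mul, smul_smul]; ring_nf
      _ = -(((μ⁻¹*Λ)^2) • (A * (Jmat n * Jmat n))) := by rw [Matrix.mul_assoc]
      _ = ((μ⁻¹*Λ)^2) • A := by rw [Jmat_mul_Jmat]; simp
  have hA0 : ∃ m i, A m i ≠ 0 := by
    by_contra h
    push_neg at h
    have hkk := congrFun (congrFun hK1 (finx ⟨0, hn⟩)) (finx ⟨0, hn⟩)
    rw [Matrix.mul_apply] at hkk
    simp only [Matrix.transpose_apply, Matrix.smul_apply, Matrix.one_apply_eq,
      smul_eq_mul, mul_one] at hkk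
    have hz : (∑ x : Fin (2*n), A x (finx ⟨0, hn⟩) * A x (finx ⟨0, hn⟩)) = 0 :=
      Finset.sum_eq_zero fun m _ => by rw [h m (finx ⟨0, hn⟩)]; ring
    rw [hz] at hkk
    exact hμpos.ne hkk
  have hsq : (μ⁻¹*Λ)^2 = 1 := by
    obtain ⟨m, i, hmi⟩ := hA0
    have := congrFun (congrFun h5 m) i
    rw [Matrix.smul_apply, smul_eq_mul] at this
    have h6 : ((μ⁻¹*Λ)^2 - 1) * A m i = 0 := by linarith [this]
    rcases mul_eq_zero.mp h6 with h7 | h7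
    · linarith
    · exact absurd h7 hmi
  have hμΛ : μ = Λ := by
    have hc1 : μ⁻¹ * Λ = 1 := by
      have hcpos : 0 < μ⁻¹ * Λ := mul_pos (inv_pos.mpr hμpos) hΛpos
      have h6 : (μ⁻¹*Λ - 1) * (μ⁻¹*Λ + 1) = 0 := by linear_combination hsq
      rcases mul_eq_zero.mp h6 with h7 | h7
      · linarith
      · linarith
    field_simp at hc1
    linarith
  have hCR : Jmat n * A = A * Jmat n := by
    rw [h4, hμΛ, inv_mul_cancel₀ hΛpos.ne', one_smul]
  have hCRyy : ∀ a b : Fin n, A (finy a) (finy b) = A (finx a) (finx b) := by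
    intro a b
    have := congrFun (congrFun hCR (finx a)) (finy b)
    rw [Jmul_finx, mulJ_finy] at this
    exact this
  have hCRyx : ∀ a b : Fin n, A (finy a) (finx b) = - A (finx a) (finy b) := by
    intro a b
    have := congrFun (congrFun hCR (finx a)) (finx b)
    rw [Jmul_finx, mulJ_finx] at this
    exact this
  -- K1 entries with μ = Λ
  have hK1e : ∀ j m', (∑ m, A j m * A m' m) = Λ * (if j = m' then 1 else 0) := by
    intro j m'
    have := congrFun (congrFun hAAt j) m'
    rw [Matrix.mul_apply] at this
    simp only [Matrix.transpose_apply, Matrix.smul_apply, smul_eq_mul, Matrix.one_apply] at this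
    rw [this, hμΛ]
  -- gradient identities
  set bv : Fin (2*n) → ℝ := fun m => fderiv ℝ F p ((Pi.single tIdx 1 : Heis n)) (hIdx m)
    with hbv
  have hb : ∀ i : Fin (2*n), 4 * sB (fun m => A m i) bv = fderiv ℝ (Lam F) p (Vb p i) := by
    intro i
    have hst := aux_star hF hU hcon hp ((Pi.single tIdx 1 : Heis n)) (Vb p i)
    rw [alpha_Vb] at hst
    rw [show alphaForm p ((Pi.single tIdx 1 : Heis n)) = 1 from alpha_etv p] at hst
    rw [show Om (Vb p i) ((Pi.single tIdx 1 : Heis n)) = 0 from Om_etv_right _] at hst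
    have hOm : Om (fderiv ℝ F p (Vb p i)) (fderiv ℝ F p ((Pi.single tIdx 1 : Heis n)))
        = sB (fun m => A m i) bv := by
      unfold sB Om
      exact Finset.sum_congr rfl fun a _ => by
        show fderiv ℝ F p (Vb p i) (xIdx a)
            * fderiv ℝ F p ((Pi.single tIdx 1 : Heis n)) (yIdx a)
          - fderiv ℝ F p (Vb p i) (yIdx a)
            * fderiv ℝ F p ((Pi.single tIdx 1 : Heis n)) (xIdx a) = _
        rw [show (fun m => A m i) (finx a) = fderiv ℝ F p (Vb p i) (hIdx (finx a)) from hD _ _,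
          show (fun m => A m i) (finy a) = fderiv ℝ F p (Vb p i) (hIdx (finy a)) from hD _ _]
        rfl
    rw [hOm] at hst
    linarith [hst]
  refine ⟨hK1e, hCRyy, hCRyx, ?_, ?_⟩
  · intro b
    have h1 := hb (finy b)
    have e : ∀ a : Fin n, A (finx a) (finy b) * bv (finy a) - A (finy a) (finy b) * bv (finx a)
        = -((A (finy a) (finx b) * bv (finy a)) + (A (finx a) (finx b) * bv (finx a))) := by
      intro a
      rw [hCRyy a b, show A (finx a) (finy b) = -A (finy a) (finx b) from by
        linarith [hCRyx a b]]
      ring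
    have h2 : sB (fun m => A m (finy b)) bv = - ∑ m, A m (finx b) * bv m := by
      calc sB (fun m => A m (finy b)) bv
          = ∑ a : Fin n, (A (finx a) (finy b) * bv (finy a)
              - A (finy a) (finy b) * bv (finx a)) := rfl
        _ = ∑ a : Fin n, -((A (finy a) (finx b) * bv (finy a))
              + (A (finx a) (finx b) * bv (finx a))) := Finset.sum_congr rfl fun a _ => e a
        _ = -((∑ a : Fin n, A (finy a) (finx b) * bv (finy a))
              + ∑ a : Fin n, A (finx a) (finx b) * bv (finx a)) := by
            rw [Finset.sum_neg_distrib, Finset.sum_add_distrib]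
        _ = - ∑ m, A m (finx b) * bv m := by
            rw [aux_sum_split (fun m => A m (finx b) * bv m)]; ring
    rw [h2] at h1
    linarith [h1]
  · intro b
    have h1 := hb (finx b)
    have e : ∀ a : Fin n, A (finx a) (finx b) * bv (finy a) - A (finy a) (finx b) * bv (finx a)
        = (A (finy a) (finy b) * bv (finy a)) + (A (finx a) (finy b) * bv (finx a)) := by
      intro a
      rw [← hCRyy a b, show A (finy a) (finx b) = -A (finx a) (finy b) from hCRyx a b]
      ring
    have h2 : sB (fun m => A m (finx b)) bv = ∑ m, A m (finy b) * bv m := by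
      calc sB (fun m => A m (finx b)) bv
          = ∑ a : Fin n, (A (finx a) (finx b) * bv (finy a)
              - A (finy a) (finx b) * bv (finx a)) := rfl
        _ = ∑ a : Fin n, ((A (finy a) (finy b) * bv (finy a))
              + (A (finx a) (finy b) * bv (finx a))) := Finset.sum_congr rfl fun a _ => e a
        _ = (∑ a : Fin n, A (finy a) (finy b) * bv (finy a))
              + ∑ a : Fin n, A (finx a) (finy b) * bv (finx a) := Finset.sum_add_distrib
        _ = ∑ m, A m (finy b) * bv m := by
            rw [aux_sum_split (fun m => A m (finy b) * bv m)]; ring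
    rw [h2] at h1
    linarith [h1]

end AuxPotential5
noncomputable section AuxPotential6

variable {n : ℕ}

lemma aux_LHS {G : Heis n → Heis n} {r : Heis n} (hGd : DifferentiableAt ℝ G r)
    (ℓ : Fin n) (i : Fin (2*n+1)) :
    Xtilde ℓ (fun q => G q i) r
      = fderiv ℝ G r ((Pi.single (xIdx ℓ) 1 : Heis n)
          + (-(2 * r (yIdx ℓ))) • (Pi.single tIdx 1 : Heis n)) i := by
  unfold Xtilde Xop Tvf pd
  simp only [aux_fderiv_coord hGd]
  rw [(fderiv ℝ G r).map_add, (fderiv ℝ G r).map_smul]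
  simp only [Pi.add_apply, Pi.smul_apply, smul_eq_mul]
  ring

end AuxPotential6
/-- Let `F : U → U'` be a `C²` conformal diffeomorphism with contact factor
`λ_F` and inverse `G`. Then for all `1 ≤ k,ℓ ≤ n`, on `U`:
`(X̃_ℓ g_k) ∘ F = X_{n+k}(f_{n+ℓ} · λ_F⁻¹)` and `(X̃_ℓ g_{n+k}) ∘ F = -X_k(f_{n+ℓ} · λ_F⁻¹)`;
that is, `ψ = f_{n+ℓ} · λ_F⁻¹` is a potential for `X̃_ℓ`. -/
theorem potential_for_Xtilde {n : ℕ}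
    (U U' : Set (Heis n)) (hU : IsOpen U) (hU' : IsOpen U')
    (hUconn : IsConnected U) (hU'conn : IsConnected U')
    (F G : Heis n → Heis n) (lamF : Heis n → ℝ)
    (hF : ContDiffOn ℝ 2 F U) (hG : ContDiffOn ℝ 2 G U')
    (hbij : Set.BijOn F U U') (hinv : Set.InvOn G F U U')
    (hconf : IsConformal U F lamF) :
    ∀ k ℓ : Fin n, ∀ p ∈ U,
      Xtilde ℓ (fun r => G r (xIdx k)) (F p)
        = Yop k (fun q => F q (yIdx ℓ) * (lamF q)⁻¹) p ∧
      Xtilde ℓ (fun r => G r (yIdx k)) (F p)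
        = -Xop k (fun q => F q (yIdx ℓ) * (lamF q)⁻¹) p := by
  intro k ℓ p hp
  have hn : 0 < n := k.pos
  have hcon : IsContact U F lamF := hconf.1
  have hFd : DifferentiableAt ℝ F p :=
    (hF.contDiffAt (hU.mem_nhds hp)).differentiableAt two_ne_zero
  have hΛd : DifferentiableAt ℝ (Lam F) p := aux_lam_diff hF hU hp
  have hΛpos : 0 < Lam F p := aux_lam_pos hcon hp
  have hΛne : Lam F p ≠ 0 := hΛpos.ne'
  obtain ⟨hK1e, hCRyy, hCRyx, hG1, hG2⟩ := aux_master hF hU hconf hp hn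
  have hD : ∀ m ℓ', D0 F p m ℓ' = fderiv ℝ F p (Vb p ℓ') (hIdx m) := aux_D0_entry hFd
  set Λ : ℝ := Lam F p with hΛdef
  set A : Matrix (Fin (2*n)) (Fin (2*n)) ℝ := D0 F p with hA
  set bv : Fin (2*n) → ℝ := fun m => fderiv ℝ F p ((Pi.single tIdx 1 : Heis n)) (hIdx m)
    with hbv
  set τ : ℝ := -(4 * F p (yIdx ℓ)) * Λ⁻¹ with hτ
  set hvc : Fin (2*n) → ℝ :=
    fun m => Λ⁻¹ * A (finx ℓ) m - τ * Λ⁻¹ * (∑ m', A m' m * bv m') with hhvc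
  set wv : Heis n := (∑ m, hvc m • Vb p m) + τ • (Pi.single tIdx 1 : Heis n) with hwv
  -- derivative of wv image
  have hfw : fderiv ℝ F p wv
      = (∑ m, hvc m • fderiv ℝ F p (Vb p m))
        + τ • fderiv ℝ F p ((Pi.single tIdx 1 : Heis n)) := by
    rw [hwv, (fderiv ℝ F p).map_add, (fderiv ℝ F p).map_smul, map_sum]
    congr 1
    exact Finset.sum_congr rfl fun m _ => (fderiv ℝ F p).map_smul _ _
  -- horizontal components
  have hswap : ∀ j : Fin (2*n),
      ∑ m, A j m * (∑ m', A m' m * bv m') = Λ * bv j := by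
    intro j
    calc ∑ m, A j m * (∑ m', A m' m * bv m')
        = ∑ m, ∑ m', A j m * (A m' m * bv m') := by
          exact Finset.sum_congr rfl fun m _ => Finset.mul_sum _ _ _
      _ = ∑ m', ∑ m, A j m * (A m' m * bv m') := Finset.sum_comm
      _ = ∑ m', (∑ m, A j m * A m' m) * bv m' := by
          refine Finset.sum_congr rfl fun m' _ => ?_
          rw [Finset.sum_mul]
          exact Finset.sum_congr rfl fun m _ => by ring
      _ = ∑ m', (Λ * (if j = m' then 1 else 0)) * bv m' := by
          exact Finset.sum_congr rfl fun m' _ => by rw [hK1e j m']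
      _ = ∑ m', (if j = m' then Λ * bv m' else 0) := by
          refine Finset.sum_congr rfl fun m' _ => ?_
          by_cases h : j = m' <;> simp [h]
      _ = Λ * bv j := by rw [Finset.sum_ite_eq]; simp
  have hwh : ∀ j : Fin (2*n),
      fderiv ℝ F p wv (hIdx j) = (if j = finx ℓ then 1 else 0) := by
    intro j
    have e0 : fderiv ℝ F p wv (hIdx j) = (∑ m, hvc m * A j m) + τ * bv j := by
      rw [hfw]
      simp only [Pi.add_apply, Finset.sum_apply, Pi.smul_apply, smul_eq_mul]
      congr 1
      exact Finset.sum_congr rfl fun m _ => by rw [hD j m]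
    have e1 : ∑ m, hvc m * A j m
        = Λ⁻¹ * (∑ m, A j m * A (finx ℓ) m)
          - τ * Λ⁻¹ * (∑ m, A j m * (∑ m', A m' m * bv m')) := by
      rw [Finset.mul_sum, Finset.mul_sum, ← Finset.sum_sub_distrib]
      refine Finset.sum_congr rfl fun m _ => ?_
      rw [hhvc]
      ring
    rw [e0, e1, hK1e j (finx ℓ), hswap j]
    field_simp
    ring
  -- alpha values
  have halphaw : alphaForm p wv = τ := by
    rw [← alphaL_apply, hwv, map_add, map_sum, (alphaL p).map_smul]
    rw [Finset.sum_eq_zero (fun m _ => by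
      rw [(alphaL p).map_smul, alphaL_apply, alpha_Vb]; simp)]
    rw [alphaL_apply]
    rw [show alphaForm p ((Pi.single tIdx 1 : Heis n)) = 1 from alpha_etv p]
    simp
  have hαFw : alphaForm (F p) (fderiv ℝ F p wv) = Λ * τ := by
    rw [hcon.2 p hp wv, aux_lam_eq hcon hp, ← hΛdef, halphaw]
  -- target vector
  set vt : Heis n := (Pi.single (xIdx ℓ) 1 : Heis n)
      + (-(2 * F p (yIdx ℓ))) • (Pi.single tIdx 1 : Heis n) with hvt
  have hvth : ∀ j : Fin (2*n), vt (hIdx j) = (if j = finx ℓ then 1 else 0) := by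
    intro j
    rw [hvt]
    simp only [Pi.add_apply, Pi.smul_apply, smul_eq_mul]
    rw [Pi.single_apply, Pi.single_apply, if_neg (aux_hIdx_ne_tIdx j)]
    simp only [show (hIdx j = xIdx ℓ) ↔ (j = finx ℓ) from by rw [← aux_hIdx_finx, aux_hIdx_inj]]
    ring
  have hαvt : alphaForm (F p) vt = -(4 * F p (yIdx ℓ)) := by
    rw [hvt]
    simp [alphaForm, Pi.single_apply, aux_xIdx_ne_tIdx, aux_yIdx_ne_tIdx,
      (aux_xIdx_ne_yIdx _ _), aux_xIdx_inj, mul_ite,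
      fun j j' => (aux_xIdx_ne_yIdx j j').symm]
    ring
  have hΛτ : Λ * τ = -(4 * F p (yIdx ℓ)) := by
    rw [hτ]
    field_simp
  -- fderiv F p wv = vt
  have heq : fderiv ℝ F p wv = vt := by
    funext i
    by_cases hi : (i : ℕ) < 2*n
    · exact ((hwh ⟨i.1, hi⟩).trans (hvth ⟨i.1, hi⟩).symm : _)
    · have hit : i = tIdx := Fin.ext (by have := i.2; simp [tIdx]; omega)
      subst hit
      have hSum : (∑ a : Fin n, (F p (xIdx a) * fderiv ℝ F p wv (yIdx a)
            - F p (yIdx a) * fderiv ℝ F p wv (xIdx a)))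
          = ∑ a : Fin n, (F p (xIdx a) * vt (yIdx a) - F p (yIdx a) * vt (xIdx a)) := by
        refine Finset.sum_congr rfl fun a _ => ?_
        have h1 : fderiv ℝ F p wv (yIdx a) = vt (yIdx a) :=
          ((hwh (finy a)).trans (hvth (finy a)).symm : _)
        have h2 : fderiv ℝ F p wv (xIdx a) = vt (xIdx a) :=
          ((hwh (finx a)).trans (hvth (finx a)).symm : _)
        rw [h1, h2]
      have hαeq : alphaForm (F p) (fderiv ℝ F p wv) = alphaForm (F p) vt := by
        rw [hαFw, hαvt, hΛτ]
      unfold alphaForm at hαeq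
      rw [hSum] at hαeq
      linarith [hαeq]
  -- inverse derivative
  have hFpU' : F p ∈ U' := hbij.mapsTo hp
  have hGd : DifferentiableAt ℝ G (F p) :=
    (hG.contDiffAt (hU'.mem_nhds hFpU')).differentiableAt two_ne_zero
  have hcompid : ∀ u : Heis n, fderiv ℝ G (F p) (fderiv ℝ F p u) = u := by
    intro u
    have hev : (G ∘ F) =ᶠ[nhds p] id := by
      filter_upwards [hU.mem_nhds hp] with q hq
      exact hinv.1 hq
    have h1 : fderiv ℝ (G ∘ F) p = ContinuousLinearMap.id ℝ (Heis n) := by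
      rw [hev.fderiv_eq, fderiv_id]
    have h2 : fderiv ℝ (G ∘ F) p = (fderiv ℝ G (F p)).comp (fderiv ℝ F p) :=
      fderiv_comp p hGd hFd
    rw [h2] at h1
    exact DFunLike.congr_fun h1 u
  -- value of wv on horizontal coordinates
  have hwval : ∀ j : Fin (2*n), wv (hIdx j) = hvc j := by
    intro j
    have h1 : (∑ m, hvc m * Vb p m (hIdx j)) = hvc j := by
      calc (∑ m, hvc m * Vb p m (hIdx j))
          = ∑ m, hvc m * (Pi.single m 1 : Fin (2*n) → ℝ) j :=
            Finset.sum_congr rfl fun m _ => by rw [Vb_hIdx p m j]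
        _ = hvc j := by
            simp only [Pi.single_apply, mul_ite, mul_one, mul_zero]
            rw [Finset.sum_ite_eq Finset.univ j hvc]
            simp
    rw [hwv]
    simp only [Pi.add_apply, Finset.sum_apply, Pi.smul_apply, smul_eq_mul]
    rw [h1, show (Pi.single tIdx 1 : Heis n) (hIdx j) = 0 from etv_hIdx j]
    ring
  -- LHS evaluations
  have hL1 : Xtilde ℓ (fun r => G r (xIdx k)) (F p) = hvc (finx k) := by
    rw [aux_LHS hGd ℓ (xIdx k)]
    rw [show ((Pi.single (xIdx ℓ) 1 : Heis n)
        + (-(2 * (F p) (yIdx ℓ))) • (Pi.single tIdx 1 : Heis n)) = vt from rfl]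
    rw [← heq, hcompid wv]
    exact hwval (finx k)
  have hL2 : Xtilde ℓ (fun r => G r (yIdx k)) (F p) = hvc (finy k) := by
    rw [aux_LHS hGd ℓ (yIdx k)]
    rw [show ((Pi.single (xIdx ℓ) 1 : Heis n)
        + (-(2 * (F p) (yIdx ℓ))) • (Pi.single tIdx 1 : Heis n)) = vt from rfl]
    rw [← heq, hcompid wv]
    exact hwval (finy k)
  -- RHS evaluations
  have hψev : (fun q => F q (yIdx ℓ) * (lamF q)⁻¹)
      =ᶠ[nhds p] (fun q => F q (yIdx ℓ) * (Lam F q)⁻¹) := by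
    filter_upwards [hU.mem_nhds hp] with q hq
    rw [aux_lam_eq hcon hq]
  have hcyl : DifferentiableAt ℝ (fun q => F q (yIdx ℓ)) p :=
    ((ContinuousLinearMap.proj (R := ℝ) (φ := fun _ : Fin (2*n+1) => ℝ)
      (yIdx ℓ)).differentiableAt).comp p hFd
  have hψ'd : DifferentiableAt ℝ (fun q => F q (yIdx ℓ) * (Lam F q)⁻¹) p :=
    hcyl.mul (hΛd.inv hΛne)
  have hfder : ∀ u : Heis n, fderiv ℝ (fun q => F q (yIdx ℓ) * (Lam F q)⁻¹) p u
      = fderiv ℝ F p u (yIdx ℓ) * Λ⁻¹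
        + F p (yIdx ℓ) * (-(fderiv ℝ (Lam F) p u) / Λ^2) := by
    intro u
    have h1 : HasDerivAt (fun s : ℝ => F (p + s • u) (yIdx ℓ) * (Lam F (p + s • u))⁻¹)
        (fderiv ℝ (fun q => F q (yIdx ℓ) * (Lam F q)⁻¹) p u) 0 := aux_diff_line hψ'd u
    have h2 := (aux_coord_line hFd u (yIdx ℓ)).mul
      ((aux_diff_line hΛd u).inv (by
        simp only [zero_smul, add_zero]
        exact hΛne))
    have h3 := h1.unique h2
    simp only [zero_smul, add_zero, Pi.inv_apply] at h3
    rw [h3, hΛdef]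
  have hR1 : Yop k (fun q => F q (yIdx ℓ) * (lamF q)⁻¹) p
      = A (finy ℓ) (finy k) * Λ⁻¹
        + F p (yIdx ℓ) * (-(fderiv ℝ (Lam F) p (Vb p (finy k))) / Λ^2) := by
    rw [aux_Yop_fderiv, hψev.fderiv_eq, hfder (Vb p (finy k)), hD (finy ℓ) (finy k)]
    rfl
  have hR2 : Xop k (fun q => F q (yIdx ℓ) * (lamF q)⁻¹) p
      = A (finy ℓ) (finx k) * Λ⁻¹
        + F p (yIdx ℓ) * (-(fderiv ℝ (Lam F) p (Vb p (finx k))) / Λ^2) := by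
    rw [aux_Xop_fderiv, hψev.fderiv_eq, hfder (Vb p (finx k)), hD (finy ℓ) (finx k)]
    rfl
  have hg1 : 4 * (∑ m, A m (finx k) * bv m)
      = -(fderiv ℝ (Lam F) p (Vb p (finy k))) := hG1 k
  have hg2 : 4 * (∑ m, A m (finy k) * bv m)
      = fderiv ℝ (Lam F) p (Vb p (finx k)) := hG2 k
  constructor
  · rw [hL1, hR1, hCRyy ℓ k, hhvc]
    rw [hτ]
    field_simp
    linear_combination (F p (yIdx ℓ)) * hg1
  · rw [hL2, hR2, hCRyx ℓ k, hhvc]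
    rw [hτ]
    field_simp
    linear_combination (F p (yIdx ℓ)) * hg2
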